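/- Let d ∈ {2, 7, 11}, and let G ∈ U(2,1;O_d) be a matrix whose (3,1) entry g = G₃₁ is nonzero (equivalently, G does not fix q∞). Then |g| = 1 (equivalently, g is a unit of O_d, i.e. g = ±1) if and only if there exist matrices A, B ∈ U(2,1;O_d) fixing q∞ such that G = A·I₀·B. (This is the algebraic content of: an isometric sphere of an element of the Picard modular group has the largest possible radius √2 if and only if it is the image of the isometric sphere of I₀ under an element of the stabiliser of q∞.) -/

import Mathlib

noncomputable section

open Matrix Complex

/-- The Gram matrix `J` of the Hermitian form of signature (2,1). -/
def Jmat : Matrix (Fin 3) (Fin 3) ℂ := !![0,0,1; 0,1,0; 1,0,0]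

/-- The ring of integers `O_d` of `ℚ(√−d)` (for `d ≡ 2 (mod 4)` it is `ℤ[i√d]`, and for
`d ≡ 3 (mod 4)` it is `ℤ[ω_d]` with `ω_d = (1+i√d)/2`), as a subset of `ℂ`. -/
def Od (d : ℕ) : Set ℂ :=
  if d % 4 = 2 then
    {z | ∃ a b : ℤ, z = (a : ℂ) + (b : ℂ) * (Complex.I * ((√(d : ℝ)) : ℝ))}
  else
    {z | ∃ a b : ℤ, z = (a : ℂ) + (b : ℂ) * ((1 + Complex.I * ((√(d : ℝ)) : ℝ)) / 2)}

def I₀ : Matrix (Fin 3) (Fin 3) ℂ := !![0,0,1; 0,-1,0; 1,0,0]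

/-- A matrix `M ∈ U(2,1;O_d)` fixing `q∞`: entries in `O_d`, `Mᴴ J M = J`, and
`M·(1,0,0)ᵗ` is a scalar multiple of `(1,0,0)ᵗ`. -/
def FixesInfinity (d : ℕ) (M : Matrix (Fin 3) (Fin 3) ℂ) : Prop :=
  (∀ i j, M i j ∈ Od d) ∧ Mᴴ * Jmat * M = Jmat ∧
    ∃ c : ℂ, M.mulVec ![1,0,0] = c • ![1,0,0]

lemma hXsq (d : ℕ) : (Complex.I * ((√(d : ℝ) : ℝ) : ℂ)) * (Complex.I * ((√(d : ℝ) : ℝ) : ℂ)) = -(d : ℂ) := by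
  rw [mul_mul_mul_comm, Complex.I_mul_I, ← Complex.ofReal_mul, Real.mul_self_sqrt (Nat.cast_nonneg d)]
  simp


lemma mem_Od2 {d : ℕ} (h : d % 4 = 2) {z : ℂ} :
    z ∈ Od d ↔ ∃ a b : ℤ, z = (a : ℂ) + (b : ℂ) * (Complex.I * ((√(d : ℝ)) : ℝ)) := by
  simp [Od, h]

lemma mem_Od3 {d : ℕ} (h : d % 4 ≠ 2) {z : ℂ} :
    z ∈ Od d ↔ ∃ a b : ℤ, z = (a : ℂ) + (b : ℂ) * ((1 + Complex.I * ((√(d : ℝ)) : ℝ)) / 2) := by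
  simp [Od, h]

section
variable {d : ℕ}

lemma Od_int (n : ℤ) : (n : ℂ) ∈ Od d := by
  unfold Od
  split <;> exact ⟨n, 0, by push_cast; ring⟩

lemma Od_zero : (0 : ℂ) ∈ Od d := by simpa using Od_int (d := d) 0
lemma Od_one : (1 : ℂ) ∈ Od d := by simpa using Od_int (d := d) 1

lemma Od_add {z w : ℂ} (hz : z ∈ Od d) (hw : w ∈ Od d) : z + w ∈ Od d := by
  by_cases h : d % 4 = 2 <;>
    [rw [mem_Od2 h] at *; rw [mem_Od3 h] at *] <;>
  · obtain ⟨a, b, rfl⟩ := hz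
    obtain ⟨a', b', rfl⟩ := hw
    exact ⟨a + a', b + b', by push_cast; ring⟩

lemma Od_neg {z : ℂ} (hz : z ∈ Od d) : -z ∈ Od d := by
  by_cases h : d % 4 = 2 <;>
    [rw [mem_Od2 h] at *; rw [mem_Od3 h] at *] <;>
  · obtain ⟨a, b, rfl⟩ := hz
    exact ⟨-a, -b, by push_cast; ring⟩

lemma Od_conj {z : ℂ} (hz : z ∈ Od d) : (starRingEnd ℂ) z ∈ Od d := by
  by_cases h : d % 4 = 2
  · rw [mem_Od2 h] at *
    obtain ⟨a, b, rfl⟩ := hz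
    refine ⟨a, -b, ?_⟩
    have : (starRingEnd ℂ) (Complex.I * ((√(2:ℕ):ℝ):ℂ)) = -(Complex.I * ((√(2:ℕ):ℝ):ℂ)) := by
      rw [_root_.map_mul, Complex.conj_I, Complex.conj_ofReal]; ring
    simp only [map_add, _root_.map_mul, map_intCast, Complex.conj_I, Complex.conj_ofReal]
    push_cast; ring
  · rw [mem_Od3 h] at *
    obtain ⟨a, b, rfl⟩ := hz
    refine ⟨a + b, -b, ?_⟩
    simp only [map_add, _root_.map_mul, map_div₀, _root_.map_one, map_ofNat, Complex.conj_I,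
      Complex.conj_ofReal, map_intCast]
    push_cast; ring

lemma Od_mul (hd : d = 2 ∨ d % 4 = 3) {z w : ℂ} (hz : z ∈ Od d) (hw : w ∈ Od d) :
    z * w ∈ Od d := by
  rcases hd with rfl | h3
  · rw [mem_Od2 rfl] at *
    obtain ⟨a, b, rfl⟩ := hz
    obtain ⟨a', b', rfl⟩ := hw
    refine ⟨a * a' - 2 * b * b', a * b' + a' * b, ?_⟩
    have h2 := hXsq 2
    push_cast
    linear_combination (b : ℂ) * b' * h2
  · have h : d % 4 ≠ 2 := by omega
    obtain ⟨k, hk⟩ : ∃ k : ℕ, d = 4 * k + 3 := ⟨d / 4, by omega⟩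
    rw [mem_Od3 h] at *
    obtain ⟨a, b, rfl⟩ := hz
    obtain ⟨a', b', rfl⟩ := hw
    refine ⟨a * a' - (k + 1) * b * b', a * b' + a' * b + b * b', ?_⟩
    have h2 := hXsq d
    have hk' : (d : ℂ) = 4 * k + 3 := by exact_mod_cast congrArg (Nat.cast : ℕ → ℂ) hk
    push_cast
    linear_combination (b : ℂ) * b' / 4 * h2 - (b : ℂ) * b' / 4 * hk'

end

lemma Od_normSq_int {d : ℕ} (hd : d = 2 ∨ d % 4 = 3) {z : ℂ} (hz : z ∈ Od d) :
    ∃ n : ℤ, (Complex.normSq z : ℝ) = (n : ℝ) := by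
  have key : ((Complex.normSq z : ℝ) : ℂ) = z * (starRingEnd ℂ) z := by
    rw [Complex.mul_conj]
  rcases hd with rfl | h3
  · rw [mem_Od2 rfl] at hz
    obtain ⟨a, b, rfl⟩ := hz
    refine ⟨a ^ 2 + 2 * b ^ 2, ?_⟩
    have h2 := hXsq 2
    have hc : ((Complex.normSq ((a : ℂ) + (b : ℂ) * (Complex.I * ((√((2:ℕ) : ℝ)) : ℝ))) : ℝ) : ℂ)
        = ((a ^ 2 + 2 * b ^ 2 : ℤ) : ℂ) := by
      rw [key]
      simp only [map_add, _root_.map_mul, map_intCast, Complex.conj_I, Complex.conj_ofReal]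
      push_cast
      linear_combination (-(b:ℂ)^2) * h2
    exact_mod_cast hc
  · have h : d % 4 ≠ 2 := by omega
    obtain ⟨k, hk⟩ : ∃ k : ℕ, d = 4 * k + 3 := ⟨d / 4, by omega⟩
    rw [mem_Od3 h] at hz
    obtain ⟨a, b, rfl⟩ := hz
    refine ⟨a ^ 2 + a * b + (k + 1) * b ^ 2, ?_⟩
    have h2 := hXsq d
    have hk' : (d : ℂ) = 4 * k + 3 := by exact_mod_cast congrArg (Nat.cast : ℕ → ℂ) hk
    have hc : ((Complex.normSq ((a : ℂ) + (b : ℂ) * ((1 + Complex.I * ((√((d:ℕ) : ℝ)) : ℝ)) / 2)) : ℝ) : ℂ)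
        = ((a ^ 2 + a * b + (k + 1) * b ^ 2 : ℤ) : ℂ) := by
      rw [key]
      simp only [map_add, _root_.map_mul, map_div₀, _root_.map_one, map_ofNat, Complex.conj_I,
        Complex.conj_ofReal, map_intCast]
      push_cast
      linear_combination (-(b:ℂ)^2/4) * h2 + ((b:ℂ)^2/4) * hk'
    exact_mod_cast hc

lemma Od_norm_one {d : ℕ} (hd : d = 2 ∨ d = 7 ∨ d = 11) {z : ℂ} (hz : z ∈ Od d)
    (h : Complex.normSq z = 1) : z = 1 ∨ z = -1 := by
  have key : ((1 : ℝ) : ℂ) = z * (starRingEnd ℂ) z := by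
    rw [Complex.mul_conj, h]
  have hd2 : d = 2 ∨ d % 4 = 3 := by rcases hd with rfl|rfl|rfl <;> norm_num
  rcases hd2 with h2 | h3
  · subst h2
    rw [mem_Od2 rfl] at hz
    obtain ⟨a, b, rfl⟩ := hz
    have hX := hXsq 2
    have hc : ((1 : ℤ) : ℂ) = ((a ^ 2 + 2 * b ^ 2 : ℤ) : ℂ) := by
      push_cast
      calc (1 : ℂ) = _ := key
        _ = _ := by
          simp only [map_add, _root_.map_mul, map_intCast, Complex.conj_I, Complex.conj_ofReal]
          push_cast
          linear_combination (-(b:ℂ)^2) * hX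
    have hint : (1 : ℤ) = a ^ 2 + 2 * b ^ 2 := by exact_mod_cast hc
    have hb : b = 0 := by nlinarith [sq_nonneg a, sq_nonneg b]
    subst hb
    have ha : a = 1 ∨ a = -1 := by
      have : a * a = 1 := by nlinarith
      rcases Int.isUnit_iff.mp (IsUnit.of_mul_eq_one (a := a) a this) with h | h <;> simp [h]
    rcases ha with rfl | rfl <;> simp
  · have h : d % 4 ≠ 2 := by omega
    obtain ⟨k, hk⟩ : ∃ k : ℕ, d = 4 * k + 3 := ⟨d / 4, by omega⟩
    have hk1 : 1 ≤ k := by rcases hd with rfl|rfl|rfl <;> omega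
    rw [mem_Od3 h] at hz
    obtain ⟨a, b, rfl⟩ := hz
    have hX := hXsq d
    have hk' : (d : ℂ) = 4 * k + 3 := by exact_mod_cast congrArg (Nat.cast : ℕ → ℂ) hk
    have hc : ((1 : ℤ) : ℂ) = ((a ^ 2 + a * b + (k + 1) * b ^ 2 : ℤ) : ℂ) := by
      push_cast
      calc (1 : ℂ) = _ := key
        _ = _ := by
          simp only [map_add, _root_.map_mul, map_div₀, _root_.map_one, map_ofNat, Complex.conj_I,
            Complex.conj_ofReal, map_intCast]
          push_cast
          linear_combination (-(b:ℂ)^2/4) * hX + ((b:ℂ)^2/4) * hk'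
    have hint : (1 : ℤ) = a ^ 2 + a * b + ((k : ℤ) + 1) * b ^ 2 := by exact_mod_cast hc
    have hkk : (2 : ℤ) ≤ (k : ℤ) + 1 := by exact_mod_cast Nat.succ_le_succ hk1
    have hb : b = 0 := by nlinarith [sq_nonneg (2*a + b), sq_nonneg b]
    subst hb
    have ha : a = 1 ∨ a = -1 := by
      have : a * a = 1 := by nlinarith
      rcases Int.isUnit_iff.mp (IsUnit.of_mul_eq_one (a := a) a this) with h | h <;> simp [h]
    rcases ha with rfl | rfl <;> simp



lemma hJJ : Jmat * Jmat = 1 := by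
  ext i j
  fin_cases i <;> fin_cases j <;>
    simp [Jmat, Matrix.mul_apply, Fin.sum_univ_three, Matrix.one_apply, Matrix.vecHead, Matrix.vecTail]

lemma hI₀I₀ : I₀ * I₀ = 1 := by
  ext i j
  fin_cases i <;> fin_cases j <;>
    simp [I₀, Matrix.mul_apply, Fin.sum_univ_three, Matrix.one_apply, Matrix.vecHead, Matrix.vecTail]

lemma hI₀U : I₀ᴴ * Jmat * I₀ = Jmat := by
  ext i j
  fin_cases i <;> fin_cases j <;>
    simp [I₀, Jmat, Matrix.mul_apply, Fin.sum_univ_three, Matrix.conjTranspose_apply, Matrix.vecHead, Matrix.vecTail]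

lemma unit_mul {M N : Matrix (Fin 3) (Fin 3) ℂ} (hM : Mᴴ * Jmat * M = Jmat)
    (hN : Nᴴ * Jmat * N = Jmat) : (M * N)ᴴ * Jmat * (M * N) = Jmat := by
  have : (M * N)ᴴ * Jmat * (M * N) = Nᴴ * (Mᴴ * Jmat * M) * N := by
    rw [Matrix.conjTranspose_mul]
    noncomm_ring
  rw [this, hM, hN]

lemma GJGH {G : Matrix (Fin 3) (Fin 3) ℂ} (hU : Gᴴ * Jmat * G = Jmat) :
    G * Jmat * Gᴴ = Jmat := by
  have h1 : (Jmat * Gᴴ * Jmat) * G = 1 := by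
    rw [Matrix.mul_assoc Jmat Gᴴ Jmat, Matrix.mul_assoc Jmat (Gᴴ * Jmat) G,
      hU, hJJ]
  have h2 : G * (Jmat * Gᴴ * Jmat) = 1 := mul_eq_one_comm.mp h1
  calc G * Jmat * Gᴴ = G * Jmat * Gᴴ * (Jmat * Jmat) := by rw [hJJ, Matrix.mul_one]
    _ = (G * (Jmat * Gᴴ * Jmat)) * Jmat := by
        simp only [Matrix.mul_assoc]
    _ = Jmat := by rw [h2, Matrix.one_mul]

def Cmat (g α β : ℂ) : Matrix (Fin 3) (Fin 3) ℂ :=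
  !![g, -(g*α), -(g*(α*(starRingEnd ℂ) α)) - β; 0, 1, (starRingEnd ℂ) α; 0, 0, g]

def Bmat (g α β : ℂ) : Matrix (Fin 3) (Fin 3) ℂ :=
  !![g, α, -(g*(α*(starRingEnd ℂ) α)) - (starRingEnd ℂ) β; 0, 1, -(g*(starRingEnd ℂ) α); 0, 0, g]

section alg
variable {g α β : ℂ}

lemma CB_eq_one (hg : g = 1 ∨ g = -1)
    (rel : β * (starRingEnd ℂ) g + α * (starRingEnd ℂ) α + g * (starRingEnd ℂ) β = 0) : Cmat g α β * Bmat g α β = 1 := by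
  rcases hg with rfl | rfl <;>
  · simp only [_root_.map_one, map_neg, Complex.conj_conj] at rel ⊢
    ext i j
    fin_cases i <;> fin_cases j <;>
      simp [Cmat, Bmat, Matrix.mul_apply, Fin.sum_univ_three, Matrix.one_apply,
        Matrix.vecHead, Matrix.vecTail] <;>
      (first
        | ring1
        | linear_combination rel
        | linear_combination -rel
        | linear_combination α * rel
        | linear_combination -α * rel
        | linear_combination (starRingEnd ℂ) α * rel
        | linear_combination -((starRingEnd ℂ) α) * rel)

lemma C_unit (hg : g = 1 ∨ g = -1)
    (rel : β * (starRingEnd ℂ) g + α * (starRingEnd ℂ) α + g * (starRingEnd ℂ) β = 0) : (Cmat g α β)ᴴ * Jmat * Cmat g α β = Jmat := by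
  rcases hg with rfl | rfl <;>
  · simp only [_root_.map_one, map_neg, Complex.conj_conj] at rel ⊢
    ext i j
    fin_cases i <;> fin_cases j <;>
      simp [Cmat, Jmat, Matrix.mul_apply, Fin.sum_univ_three, Matrix.conjTranspose_apply,
        Matrix.vecHead, Matrix.vecTail] <;>
      (first
        | ring1
        | linear_combination rel
        | linear_combination -rel
        | linear_combination α * rel
        | linear_combination -α * rel
        | linear_combination (starRingEnd ℂ) α * rel
        | linear_combination -((starRingEnd ℂ) α) * rel)

lemma B_unit (hg : g = 1 ∨ g = -1)
    (rel : β * (starRingEnd ℂ) g + α * (starRingEnd ℂ) α + g * (starRingEnd ℂ) β = 0) : (Bmat g α β)ᴴ * Jmat * Bmat g α β = Jmat := by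
  rcases hg with rfl | rfl <;>
  · simp only [_root_.map_one, map_neg, Complex.conj_conj] at rel ⊢
    ext i j
    fin_cases i <;> fin_cases j <;>
      simp [Bmat, Jmat, Matrix.mul_apply, Fin.sum_univ_three, Matrix.conjTranspose_apply,
        Matrix.vecHead, Matrix.vecTail] <;>
      (first
        | ring1
        | linear_combination rel
        | linear_combination -rel
        | linear_combination α * rel
        | linear_combination -α * rel
        | linear_combination (starRingEnd ℂ) α * rel
        | linear_combination -((starRingEnd ℂ) α) * rel)

end alg

lemma Od_matmul {d : ℕ} (hd2 : d = 2 ∨ d % 4 = 3) {M N : Matrix (Fin 3) (Fin 3) ℂ}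
    (hM : ∀ i j, M i j ∈ Od d) (hN : ∀ i j, N i j ∈ Od d) :
    ∀ i j, (M * N) i j ∈ Od d := fun i j => by
  rw [Matrix.mul_apply, Fin.sum_univ_three]
  exact Od_add (Od_add (Od_mul hd2 (hM _ _) (hN _ _)) (Od_mul hd2 (hM _ _) (hN _ _)))
    (Od_mul hd2 (hM _ _) (hN _ _))

/-- **Proposition 4.1 of the paper** (algebraic form): for `d ∈ {2,7,11}` and
`G ∈ U(2,1;O_d)` with `g = G₃₁ ≠ 0`, the isometric sphere of `G` has the largest radius
`√2` (i.e. `|g| = 1`) if and only if `G = A·I₀·B` for some `A, B ∈ U(2,1;O_d)` fixing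
`q∞`. -/

theorem isometric_sphere_largest_iff
    (d : ℕ) (hd : d ∈ ({2, 7, 11} : Set ℕ))
    (G : Matrix (Fin 3) (Fin 3) ℂ)
    (hG : ∀ i j, G i j ∈ Od d)
    (hU : Gᴴ * Jmat * G = Jmat)
    (hg : G 2 0 ≠ 0) :
    ‖G 2 0‖ = 1 ↔
      ∃ A B : Matrix (Fin 3) (Fin 3) ℂ,
        FixesInfinity d A ∧ FixesInfinity d B ∧ G = A * I₀ * B := by
  have hd' : d = 2 ∨ d = 7 ∨ d = 11 := by simpa [Set.mem_insert_iff] using hd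
  have hd2 : d = 2 ∨ d % 4 = 3 := by rcases hd' with rfl|rfl|rfl <;> norm_num
  constructor
  · intro habs
    have hn1 : Complex.normSq (G 2 0) = 1 := by
      have h := Complex.sq_norm (G 2 0)
      rw [habs] at h
      simpa using h.symm
    have hg1 : G 2 0 = 1 ∨ G 2 0 = -1 := Od_norm_one hd' (hG 2 0) hn1
    have hU' : G * Jmat * Gᴴ = Jmat := GJGH hU
    have e22 := congrFun (congrFun hU' 2) 2
    have e12 := congrFun (congrFun hU' 1) 2
    simp [Matrix.mul_apply, Fin.sum_univ_three, Matrix.conjTranspose_apply, Jmat,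
      Matrix.vecHead, Matrix.vecTail] at e22 e12
    set C := Cmat (G 2 0) (G 2 1) (G 2 2) with hC
    set B := Bmat (G 2 0) (G 2 1) (G 2 2) with hB
    have rel : G 2 2 * (starRingEnd ℂ) (G 2 0) + G 2 1 * (starRingEnd ℂ) (G 2 1)
        + G 2 0 * (starRingEnd ℂ) (G 2 2) = 0 := by linear_combination e22
    have hCB : C * B = 1 := CB_eq_one hg1 rel
    have hCU : Cᴴ * Jmat * C = Jmat := C_unit hg1 rel
    have hBU : Bᴴ * Jmat * B = Jmat := B_unit hg1 rel
    have hOdC : ∀ i j, C i j ∈ Od d := by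
      intro i j
      have h0 := hG 2 0
      have h1 := hG 2 1
      have h2 := hG 2 2
      fin_cases i <;> fin_cases j <;>
        simp [hC, Cmat, Matrix.vecHead, Matrix.vecTail, sub_eq_add_neg] <;>
        first
          | exact Od_zero
          | exact Od_one
          | exact h0
          | exact Od_neg (Od_mul hd2 h0 h1)
          | exact Od_add (Od_neg (Od_mul hd2 h0 (Od_mul hd2 h1 (Od_conj h1)))) (Od_neg h2)
          | exact Od_conj h1
    have hOdB : ∀ i j, B i j ∈ Od d := by
      intro i j
      have h0 := hG 2 0
      have h1 := hG 2 1
      have h2 := hG 2 2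
      fin_cases i <;> fin_cases j <;>
        simp [hB, Bmat, Matrix.vecHead, Matrix.vecTail, sub_eq_add_neg] <;>
        first
          | exact Od_zero
          | exact Od_one
          | exact h0
          | exact h1
          | exact Od_add (Od_neg (Od_mul hd2 h0 (Od_mul hd2 h1 (Od_conj h1)))) (Od_neg (Od_conj h2))
          | exact Od_neg (Od_mul hd2 h0 (Od_conj h1))
    have hOdI : ∀ i j, I₀ i j ∈ Od d := by
      intro i j
      fin_cases i <;> fin_cases j <;>
        simp [I₀, Matrix.vecHead, Matrix.vecTail] <;>
        first
          | exact Od_zero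
          | exact Od_one
          | exact Od_neg Od_one
    refine ⟨G * C * I₀, B, ⟨Od_matmul hd2 (Od_matmul hd2 hG hOdC) hOdI,
      unit_mul (unit_mul hU hCU) hI₀U, ?_⟩, ⟨hOdB, hBU, ?_⟩, ?_⟩
    · refine ⟨(G * C * I₀) 0 0, ?_⟩
      funext i
      fin_cases i <;>
        simp [Matrix.mulVec, dotProduct, Fin.sum_univ_three, Matrix.mul_apply, hC, Cmat, I₀,
          Matrix.vecHead, Matrix.vecTail] <;>
        rcases hg1 with hgv | hgv <;>
        rw [hgv] at rel e12 ⊢ <;>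
        simp only [_root_.map_one, map_neg, mul_one, one_mul, mul_neg, neg_mul, neg_neg] at rel e12 ⊢ <;>
        (first
          | ring1
          | linear_combination e12 - G 1 0 * rel
          | linear_combination e12 + G 1 0 * rel
          | linear_combination -e12 - G 1 0 * rel
          | linear_combination -e12 + G 1 0 * rel
          | linear_combination rel
          | linear_combination -rel)
    · refine ⟨G 2 0, ?_⟩
      funext i
      fin_cases i <;>
        simp [Matrix.mulVec, dotProduct, Fin.sum_univ_three, hB, Bmat,
          Matrix.vecHead, Matrix.vecTail]
    · rw [Matrix.mul_assoc (G * C) I₀ I₀, hI₀I₀, Matrix.mul_one, Matrix.mul_assoc, hCB,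
        Matrix.mul_one]
  · rintro ⟨A, B, ⟨hAod, hAU, cA, hcA⟩, ⟨hBod, hBU, cB, hcB⟩, hGeq⟩
    have hA1 : A 1 0 = 0 := by
      have h := congrFun hcA 1
      simpa [Matrix.mulVec, dotProduct, Fin.sum_univ_three] using h
    have hA2 : A 2 0 = 0 := by
      have h := congrFun hcA 2
      simpa [Matrix.mulVec, dotProduct, Fin.sum_univ_three] using h
    have hB1 : B 1 0 = 0 := by
      have h := congrFun hcB 1
      simpa [Matrix.mulVec, dotProduct, Fin.sum_univ_three] using h
    have hB2 : B 2 0 = 0 := by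
      have h := congrFun hcB 2
      simpa [Matrix.mulVec, dotProduct, Fin.sum_univ_three] using h
    have keyA : (starRingEnd ℂ) (A 2 2) * A 0 0 = 1 := by
      have h := congrFun (congrFun hAU 2) 0
      simp [Matrix.mul_apply, Fin.sum_univ_three, Matrix.conjTranspose_apply, Jmat,
        Matrix.vecHead, Matrix.vecTail, hA1, hA2] at h
      linear_combination h
    have keyB : (starRingEnd ℂ) (B 2 2) * B 0 0 = 1 := by
      have h := congrFun (congrFun hBU 2) 0
      simp [Matrix.mul_apply, Fin.sum_univ_three, Matrix.conjTranspose_apply, Jmat,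
        Matrix.vecHead, Matrix.vecTail, hB1, hB2] at h
      linear_combination h
    have hG20 : G 2 0 = A 2 2 * B 0 0 := by
      rw [hGeq]
      simp [Matrix.mul_apply, Fin.sum_univ_three, I₀, hB1, hB2,
        Matrix.vecHead, Matrix.vecTail]
    have normsq_one : ∀ x y : ℂ, x ∈ Od d → y ∈ Od d →
        (starRingEnd ℂ) x * y = 1 → Complex.normSq x = 1 ∧ Complex.normSq y = 1 := by
      intro x y hx hy hxy
      obtain ⟨n, hn⟩ := Od_normSq_int hd2 hx
      obtain ⟨m, hm⟩ := Od_normSq_int hd2 hy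
      have hmul : Complex.normSq x * Complex.normSq y = 1 := by
        have := congrArg Complex.normSq hxy
        rwa [Complex.normSq_mul, Complex.normSq_conj, _root_.map_one] at this
      have hnm : (n : ℝ) * (m : ℝ) = 1 := by rw [← hn, ← hm]; exact hmul
      have hnmZ : n * m = 1 := by exact_mod_cast hnm
      have hn0 : 0 ≤ n := by
        have : (0:ℝ) ≤ (n:ℝ) := hn ▸ Complex.normSq_nonneg x
        exact_mod_cast this
      have hn1 : n = 1 := by
        rcases Int.isUnit_iff.mp (IsUnit.of_mul_eq_one (a := n) m hnmZ) with h | h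
        · exact h
        · omega
      have hm1 : m = 1 := by
        rw [hn1, one_mul] at hnmZ
        exact hnmZ
      constructor
      · rw [hn, hn1]; norm_num
      · rw [hm, hm1]; norm_num
    have hnA := (normsq_one _ _ (hAod 2 2) (hAod 0 0) keyA).1
    have hnB := (normsq_one _ _ (hBod 2 2) (hBod 0 0) keyB).2
    have : Complex.normSq (G 2 0) = 1 := by
      rw [hG20, Complex.normSq_mul, hnA, hnB, mul_one]
    rw [Complex.norm_def, this, Real.sqrt_one]

end
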